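/- arXiv:2301.04920 — 5 statements merged into one kernel-verified Lean document; each statement's English description precedes it below -/
import Mathlib

section
/- Assume n ≤ 3t. Let base : Fin n → Option V be an input configuration with exactly n − t process-proposal pairs, i.e., |π(base)| = n − t, and let p : Fin n → V be any total assignment of proposals. Then there exists c' : Fin n → Option V with |π(c')| = n − t such that c' i = some (p i) for every i ∈ π(c'), and c' is compatible with base. (This is the combinatorial construction used to show that, for n ≤ 3t, every full input configuration admits a companion configuration of size n − t that borrows its proposals while being compatible with the fixed base configuration.) -/
/-- The support of a partial assignment of proposals. -/
def supp {n : ℕ} {V : Type*} (c : Fin n → Option V) : Finset (Fin n) :=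
  Finset.univ.filter (fun i => (c i).isSome)

/-- Compatibility relation between assignments. -/
def Compatible {n : ℕ} {V : Type*} (t : ℕ) (c₁ c₂ : Fin n → Option V) : Prop :=
  (supp c₁ ∩ supp c₂).card ≤ t ∧ (supp c₁ \ supp c₂).Nonempty ∧ (supp c₂ \ supp c₁).Nonempty

theorem compatible_companion_configuration
    (n t : ℕ) (ht : 0 < t) (htn : t < n) (hn : n ≤ 3 * t) (V : Type*)
    (base : Fin n → Option V) (hbase : (supp base).card = n - t)
    (p : Fin n → V) :
    ∃ c' : Fin n → Option V,
      (supp c').card = n - t ∧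
      (∀ i ∈ supp c', c' i = some (p i)) ∧
      Compatible t c' base := by
  classical
  set B := supp base with hB
  have hBc : Bᶜ.card = t := by
    rw [Finset.card_compl, hbase]
    simp
    omega
  obtain ⟨T, hTB, hTcard⟩ := Finset.exists_subset_card_eq (s := B) (n := n - t - t) (by rw [hbase]; omega)
  obtain ⟨U, hUB, hUcard⟩ := Finset.exists_subset_card_eq (s := Bᶜ) (n := min (n - t) t) (by rw [hBc]; omega)
  set S := U ∪ T with hS
  have hUdisj : Disjoint U T := by
    apply Finset.disjoint_left.mpr
    intro a haU haT
    exact (Finset.mem_compl.mp (hUB haU)) (hTB haT)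
  have hScard : S.card = n - t := by
    rw [Finset.card_union_of_disjoint hUdisj, hUcard, hTcard]; omega
  have hSB : S ∩ B = T := by
    rw [hS, Finset.union_inter_distrib_right]
    have h1 : U ∩ B = ∅ := by
      apply Finset.eq_empty_of_forall_notMem
      intro a ha
      rw [Finset.mem_inter] at ha
      exact (Finset.mem_compl.mp (hUB ha.1)) ha.2
    have h2 : T ∩ B = T := Finset.inter_eq_left.mpr hTB
    rw [h1, h2, Finset.empty_union]
  have hsupp : supp (fun i => if i ∈ S then some (p i) else none) = S := by
    ext i
    simp only [supp, Finset.mem_filter, Finset.mem_univ, true_and]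
    by_cases h : i ∈ S <;> simp [h]
  refine ⟨fun i => if i ∈ S then some (p i) else none, ?_, ?_, ?_, ?_, ?_⟩
  · rw [hsupp, hScard]
  · intro i hi
    rw [hsupp] at hi
    simp [hi]
  · rw [hsupp, hSB, hTcard]; omega
  · -- (S \ B).Nonempty : U is inside it and U is nonempty
    have hU : U.Nonempty := by
      rw [← Finset.card_pos, hUcard]; omega
    obtain ⟨a, ha⟩ := hU
    rw [hsupp]
    exact ⟨a, Finset.mem_sdiff.mpr ⟨Finset.mem_union_left _ ha,
      Finset.mem_compl.mp (hUB ha)⟩⟩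
  · rw [hsupp, ← Finset.card_pos]
    have := Finset.card_sdiff_add_card_inter B S
    rw [Finset.inter_comm, hSB, hTcard, hbase] at this
    rw [← hB]
    omega
end

section
/- Assume n > 3t. Let c : Fin n → Option V be an input configuration (n − t ≤ |π(c)|) and let Q ∈ π(c). Then there exists an input configuration c' : Fin n → Option V with n − t ≤ |π(c')| such that Q ∉ π(c') and c' is similar to c. (This is the combinatorial construction, used in the quadratic lower bound, of an input configuration that excludes a designated process Q yet remains similar to the original configuration.) -/
/-- Two assignments are similar: common support is nonempty and they agree on it. -/
def SimilarConfig {n : ℕ} {V : Type*} (c₁ c₂ : Fin n → Option V) : Prop :=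
  (supp c₁ ∩ supp c₂).Nonempty ∧ ∀ i ∈ supp c₁ ∩ supp c₂, c₁ i = c₂ i

theorem exclude_process_similar_configuration
    (n t : ℕ) (ht : 0 < t) (htn : t < n) (hn : n > 3 * t) (V : Type*)
    (c : Fin n → Option V) (hc : n - t ≤ (supp c).card)
    (Q : Fin n) (hQ : Q ∈ supp c) :
    ∃ c' : Fin n → Option V,
      n - t ≤ (supp c').card ∧ Q ∉ supp c' ∧ SimilarConfig c' c := by
  have hQs : (c Q).isSome := by simpa [supp] using hQ
  set v : V := (c Q).get hQs with hv
  set c' : Fin n → Option V := fun i => if i = Q then none else some ((c i).getD v) with hc'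
  have hsupp : supp c' = Finset.univ.erase Q := by
    ext i
    simp [supp, c', Finset.mem_erase]
  refine ⟨c', ?_, ?_, ?_, ?_⟩
  · rw [hsupp, Finset.card_erase_of_mem (Finset.mem_univ _), Finset.card_univ, Fintype.card_fin]
    omega
  · simp [hsupp]
  · -- nonempty intersection
    have h2 : 1 < (supp c).card := by omega
    obtain ⟨a, ha, hne⟩ := Finset.exists_mem_ne h2 Q
    refine ⟨a, ?_⟩
    rw [hsupp]
    exact Finset.mem_inter.mpr ⟨Finset.mem_erase.mpr ⟨hne, Finset.mem_univ _⟩, ha⟩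
  · intro i hi
    rw [hsupp] at hi
    obtain ⟨hie, his⟩ := Finset.mem_inter.mp hi
    have hine : i ≠ Q := (Finset.mem_erase.mp hie).1
    have : (c i).isSome := by simpa [supp] using his
    obtain ⟨w, hw⟩ := Option.isSome_iff_exists.mp this
    simp [c', hine, hw]
end

section
/- Assume n > 3t. Let c : Fin n → Option V have |π(c)| = n − t, and let c₁, c₂ : Fin n → Option V be input configurations (n − t ≤ |π(c₁)| and n − t ≤ |π(c₂)|), each similar to c. If c₁ is unanimous with value w₁ (i.e., c₁ i = some w₁ for every i ∈ π(c₁)) and c₂ is unanimous with value w₂ (i.e., c₂ i = some w₂ for every i ∈ π(c₂)), then w₁ = w₂. (Thus, when n > 3t, at most one value can be the unanimous proposal of an input configuration similar to a given configuration of n − t process-proposal pairs.) -/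
/-- Two assignments are similar: common support is nonempty and they agree on it. -/
def SimilarAssign {n : ℕ} {V : Type*} (c₁ c₂ : Fin n → Option V) : Prop :=
  (supp c₁ ∩ supp c₂).Nonempty ∧ ∀ i ∈ supp c₁ ∩ supp c₂, c₁ i = c₂ i

theorem unique_unanimous_value_of_similar_configurations
    (n t : ℕ) (ht : 0 < t) (htn : t < n) (hn : n > 3 * t) (V : Type*)
    (c : Fin n → Option V) (hc : (supp c).card = n - t)
    (c₁ c₂ : Fin n → Option V)
    (h₁ : n - t ≤ (supp c₁).card) (h₂ : n - t ≤ (supp c₂).card)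
    (hsim₁ : SimilarAssign c₁ c) (hsim₂ : SimilarAssign c₂ c)
    (w₁ w₂ : V)
    (huna₁ : ∀ i ∈ supp c₁, c₁ i = some w₁)
    (huna₂ : ∀ i ∈ supp c₂, c₂ i = some w₂) :
    w₁ = w₂ := by
  obtain ⟨-, hag₁⟩ := hsim₁
  obtain ⟨-, hag₂⟩ := hsim₂
  set A := supp c₁ ∩ supp c with hAdef
  set B := supp c₂ ∩ supp c with hBdef
  have hAc : A ⊆ supp c := Finset.inter_subset_right
  have hBc : B ⊆ supp c := Finset.inter_subset_right
  have hne : (A ∩ B).Nonempty := by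
    rw [← Finset.card_pos]
    have h1 : (supp c₁ ∪ supp c).card ≤ n := by
      simpa using Finset.card_le_card (Finset.subset_univ (supp c₁ ∪ supp c))
    have h2 : (supp c₂ ∪ supp c).card ≤ n := by
      simpa using Finset.card_le_card (Finset.subset_univ (supp c₂ ∪ supp c))
    have hA := Finset.card_inter_add_card_union (supp c₁) (supp c)
    have hB := Finset.card_inter_add_card_union (supp c₂) (supp c)
    have hU : (A ∪ B).card ≤ (supp c).card :=
      Finset.card_le_card (Finset.union_subset hAc hBc)
    have hI := Finset.card_inter_add_card_union A B
    have hAe : A.card = (supp c₁ ∩ supp c).card := rfl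
    have hBe : B.card = (supp c₂ ∩ supp c).card := rfl
    omega
  obtain ⟨i, hi⟩ := hne
  obtain ⟨hiA, hiB⟩ := Finset.mem_inter.1 hi
  have e1 := hag₁ i hiA
  have e2 := hag₂ i hiB
  have u1 := huna₁ i (Finset.mem_inter.1 hiA).1
  have u2 := huna₂ i (Finset.mem_inter.1 hiB).1
  have : some w₁ = some w₂ := by rw [← u1, e1, ← e2, u2]
  exact Option.some_injective _ this
end

section
/- Strong Validity satisfies the similarity condition when n > 3t: assume n > 3t and V is nonempty. Then for every c : Fin n → Option V with |π(c)| = n − t there exists a value v : V such that, for every input configuration c' : Fin n → Option V (with n − t ≤ |π(c')|) that is similar to c and every w : V, if c' i = some w for all i ∈ π(c') then w = v. (Equivalently, v belongs to the set of Strong-Validity-admissible decisions of every input configuration similar to c, where Strong Validity admits only the unanimous value when all proposals agree, and admits every value otherwise.) -/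
theorem strong_validity_similarity_condition
    (n t : ℕ) (ht : 0 < t) (htn : t < n) (hn : n > 3 * t)
    (V : Type*) [Nonempty V]
    (c : Fin n → Option V) (hc : (supp c).card = n - t) :
    ∃ v : V, ∀ c' : Fin n → Option V,
      n - t ≤ (supp c').card → SimilarAssign c' c →
      ∀ w : V, (∀ i ∈ supp c', c' i = some w) → w = v := by
  classical
  -- Key: any unanimous value w of a similar c' forces c = some w on a large set.
  have key : ∀ (c' : Fin n → Option V), n - t ≤ (supp c').card → SimilarAssign c' c →
      ∀ w : V, (∀ i ∈ supp c', c' i = some w) →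
      n - 2 * t ≤ ((supp c).filter (fun i => c i = some w)).card := by
    intro c' hcard hsim w hw
    have hsub : supp c' ∩ supp c ⊆ (supp c).filter (fun i => c i = some w) := by
      intro i hi
      have hi' := Finset.mem_inter.mp hi
      have h1 : c' i = c i := hsim.2 i hi
      have h2 : c' i = some w := hw i hi'.1
      exact Finset.mem_filter.mpr ⟨hi'.2, by rw [← h1, h2]⟩
    have h3 := Finset.card_le_card hsub
    have h4 : (supp c' ∩ supp c).card + (supp c' ∪ supp c).card
        = (supp c').card + (supp c).card := Finset.card_inter_add_card_union _ _
    have h5 : (supp c' ∪ supp c).card ≤ n := by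
      simpa using Finset.card_le_card (Finset.subset_univ (supp c' ∪ supp c))
    omega
  by_cases h : ∃ c' : Fin n → Option V, (n - t ≤ (supp c').card ∧ SimilarAssign c' c) ∧
      ∃ w : V, ∀ i ∈ supp c', c' i = some w
  · obtain ⟨c₀, ⟨hc0, hs0⟩, w₀, hw0⟩ := h
    refine ⟨w₀, fun c' h1 h2 w hw => ?_⟩
    by_contra hne
    have k1 := key c₀ hc0 hs0 w₀ hw0
    have k2 := key c' h1 h2 w hw
    have hdisj : Disjoint ((supp c).filter (fun i => c i = some w))
        ((supp c).filter (fun i => c i = some w₀)) := by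
      rw [Finset.disjoint_left]
      intro x hx hx'
      have e1 := (Finset.mem_filter.mp hx).2
      have e2 := (Finset.mem_filter.mp hx').2
      rw [e1] at e2
      exact hne (by simpa using e2)
    have hun : ((supp c).filter (fun i => c i = some w)).card +
        ((supp c).filter (fun i => c i = some w₀)).card ≤ (supp c).card := by
      rw [← Finset.card_union_of_disjoint hdisj]
      exact Finset.card_le_card (Finset.union_subset (Finset.filter_subset _ _)
        (Finset.filter_subset _ _))
    omega
  · exact ⟨Classical.arbitrary V, fun c' h1 h2 w hw =>
      absurd ⟨c', ⟨h1, h2⟩, w, hw⟩ h⟩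
end

section
/- Weak Validity satisfies the similarity condition: assume V is nonempty. Then for every c : Fin n → Option V with |π(c)| = n − t there exists a value v : V such that, for every ĉ : Fin n → Option V with full support (ĉ i ≠ none for all i : Fin n) that is similar to c and every w : V, if ĉ i = some w for all i : Fin n then w = v. (Equivalently, v belongs to the set of Weak-Validity-admissible decisions of every input configuration similar to c, where Weak Validity admits only the unanimous value when all n processes are correct and propose the same value, and admits every value otherwise.) -/
theorem weak_validity_similarity_condition
    (n t : ℕ) (ht : 0 < t) (htn : t < n)
    (V : Type*) [Nonempty V]
    (c : Fin n → Option V) (hc : (supp c).card = n - t) :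
    ∃ v : V, ∀ chat : Fin n → Option V,
      (∀ i : Fin n, chat i ≠ none) → SimilarAssign chat c →
      ∀ w : V, (∀ i : Fin n, chat i = some w) → w = v := by
  have hpos : 0 < (supp c).card := by
    rw [hc]; omega
  obtain ⟨i₀, hi₀⟩ := Finset.card_pos.mp hpos
  have hsome : (c i₀).isSome := by
    simpa [supp] using hi₀
  obtain ⟨v, hv⟩ := Option.isSome_iff_exists.mp hsome
  refine ⟨v, fun chat hfull hsim w hw => ?_⟩
  have hmem : i₀ ∈ supp chat ∩ supp c := by
    simp [supp, Finset.mem_inter, Option.isSome_iff_ne_none, hfull i₀, hsome, hv]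
  have := hsim.2 i₀ hmem
  rw [hw i₀, hv] at this
  exact Option.some_injective _ this
end
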